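/- Let (b_j)_{j≥1} be a summable sequence of real numbers and define W : ℝ → ℝ by W(x) = Σ_{j≥1} b_j·sin(j·x). For an integer m ≥ 1 define φ₊(x) = (exp(i·(m-1)·x) + exp(-i·m·x))/(2√π) and φ₋(x) = (exp(i·(m-1)·x) - exp(-i·m·x))/(2·i·√π). Then ∫_0^{2π} W(x)·φ₊(x)·conj(φ₋(x)) dx = b_{2m-1}/2. -/

import Mathlib

open Real MeasureTheory


lemma cos_int_integral (k : ℤ) (hk : k ≠ 0) :
    ∫ x in (0:ℝ)..(2*π), Real.cos ((k:ℝ) * x) = 0 := by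
  have hk' : (k:ℝ) ≠ 0 := Int.cast_ne_zero.mpr hk
  rw [intervalIntegral.integral_comp_mul_left Real.cos hk', integral_cos]
  simp
  right
  rw [show (k:ℝ)*(2*π) = ((2*k:ℤ):ℝ)*π by push_cast; ring]
  exact Real.sin_int_mul_pi _

lemma sin_orth (j N : ℕ) (hN : 1 ≤ N) :
    ∫ x in (0:ℝ)..(2*π), Real.sin ((j:ℝ)*x) * Real.sin ((N:ℝ)*x)
      = if j = N then π else 0 := by
  have hps : ∀ x : ℝ, Real.sin ((j:ℝ)*x) * Real.sin ((N:ℝ)*x)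
      = (Real.cos ((((j:ℤ)-(N:ℤ):ℤ):ℝ)*x) - Real.cos ((((j:ℤ)+(N:ℤ):ℤ):ℝ)*x)) / 2 := by
    intro x
    push_cast
    rw [show ((j:ℝ)-N)*x = (j:ℝ)*x - N*x by ring, show ((j:ℝ)+N)*x = (j:ℝ)*x + N*x by ring,
      Real.cos_sub, Real.cos_add]
    ring
  simp_rw [hps]
  rw [intervalIntegral.integral_div]
  rw [intervalIntegral.integral_sub
    ((by fun_prop : Continuous fun x : ℝ => Real.cos ((((j:ℤ)-(N:ℤ):ℤ):ℝ)*x)).intervalIntegrable _ _)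
    ((by fun_prop : Continuous fun x : ℝ => Real.cos ((((j:ℤ)+(N:ℤ):ℤ):ℝ)*x)).intervalIntegrable _ _)]
  by_cases h : j = N
  · subst h
    rw [cos_int_integral _ (by positivity : ((j:ℤ)+j) ≠ 0)]
    simp
  · rw [cos_int_integral _ (by omega : ((j:ℤ)-N) ≠ 0), cos_int_integral _ (by omega : ((j:ℤ)+N) ≠ 0)]
    simp [h]

lemma pointwise_id (m : ℕ) (hm : 1 ≤ m) (x : ℝ) :
    (Complex.exp (Complex.I * ((m : ℂ) - 1) * (x : ℂ))
        + Complex.exp (-(Complex.I * (m : ℂ) * (x : ℂ)))) / (2 * (Real.sqrt π : ℂ))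
    * starRingEnd ℂ ((Complex.exp (Complex.I * ((m : ℂ) - 1) * (x : ℂ))
        - Complex.exp (-(Complex.I * (m : ℂ) * (x : ℂ))))
        / (2 * Complex.I * (Real.sqrt π : ℂ)))
    = ((Real.sin (((2*m-1 : ℕ) : ℝ) * x) / (2 * π) : ℝ) : ℂ) := by
  set a := Complex.exp (Complex.I * ((m : ℂ) - 1) * (x : ℂ)) with ha_def
  set b := Complex.exp (-(Complex.I * (m : ℂ) * (x : ℂ))) with hb_def
  have ha0 : a ≠ 0 := Complex.exp_ne_zero _
  have hb0 : b ≠ 0 := Complex.exp_ne_zero _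
  have hconj : ∀ z : ℂ, (starRingEnd ℂ) z = -z → (starRingEnd ℂ) (Complex.exp z) = (Complex.exp z)⁻¹ := by
    intro z hz
    rw [← Complex.exp_conj, hz, Complex.exp_neg]
  have ha : (starRingEnd ℂ) a = a⁻¹ := by
    apply hconj; simp [Complex.conj_ofReal]
  have hb : (starRingEnd ℂ) b = b⁻¹ := by
    apply hconj; simp [Complex.conj_ofReal]
  have hcast : (((2*m-1 : ℕ) : ℂ)) = 2*(m:ℂ) - 1 := by
    push_cast [Nat.cast_sub (by omega : 1 ≤ 2*m)]; ring
  have hba : b * a⁻¹ = Complex.exp (-((((2*m-1 : ℕ) : ℝ) * x : ℝ) * Complex.I)) := by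
    rw [hb_def, ha_def, ← Complex.exp_neg, ← Complex.exp_add]
    congr 1
    push_cast [hcast]
    ring
  have hab : a * b⁻¹ = Complex.exp (((((2*m-1 : ℕ) : ℝ) * x : ℝ) : ℂ) * Complex.I) := by
    rw [hb_def, ha_def, ← Complex.exp_neg, ← Complex.exp_add]
    congr 1
    push_cast [hcast]
    ring
  have hsin : ((Real.sin (((2*m-1 : ℕ) : ℝ) * x) : ℝ) : ℂ)
      = (b * a⁻¹ - a * b⁻¹) * Complex.I / 2 := by
    rw [hba, hab, Complex.ofReal_sin, Complex.sin]
    push_cast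
    ring_nf
  have hπ : ((Real.sqrt π : ℂ)) * (Real.sqrt π : ℂ) = (π : ℂ) := by
    rw [← Complex.ofReal_mul, Real.mul_self_sqrt Real.pi_pos.le]
  have hπ0 : (π : ℂ) ≠ 0 := Complex.ofReal_ne_zero.mpr Real.pi_ne_zero
  have hs0 : ((Real.sqrt π : ℂ)) ≠ 0 := by
    intro h; rw [h, mul_zero] at hπ; exact hπ0 hπ.symm
  rw [Complex.ofReal_div]
  rw [hsin]
  rw [map_div₀, map_sub, ha, hb, map_mul, map_mul, Complex.conj_I]
  simp only [Complex.conj_ofReal, map_ofNat]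
  field_simp
  ring
  rw [show ((Real.sqrt π : ℂ))^2 = (π:ℂ) by rw [← hπ]; ring, Complex.I_sq]
  push_cast
  ring


lemma real_side (b : ℕ → ℝ) (hb : Summable b) (W : ℝ → ℝ)
    (hW : ∀ x : ℝ, W x = ∑' j : ℕ, b j * Real.sin (j * x))
    (N : ℕ) (hN : 1 ≤ N) :
    ∫ x in (0:ℝ)..(2*π), W x * Real.sin ((N:ℝ)*x) = b N * π := by
  have h2π : (0:ℝ) ≤ 2*π := by positivity
  rw [intervalIntegral.integral_of_le h2π]
  have hpt : ∀ x : ℝ, W x * Real.sin ((N:ℝ)*x)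
      = ∑' j : ℕ, b j * Real.sin ((j:ℝ)*x) * Real.sin ((N:ℝ)*x) := by
    intro x
    rw [hW x, ← tsum_mul_right]
  simp_rw [hpt]
  have hint : ∀ j : ℕ, Integrable (fun x : ℝ => b j * Real.sin ((j:ℝ)*x) * Real.sin ((N:ℝ)*x))
      (volume.restrict (Set.Ioc 0 (2*π))) := by
    intro j
    exact (by fun_prop : Continuous fun x : ℝ => b j * Real.sin ((j:ℝ)*x) * Real.sin ((N:ℝ)*x)).integrableOn_Ioc
  have hmeas : (volume (Set.Ioc (0:ℝ) (2*π))).toReal = 2*π := by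
    rw [Real.volume_Ioc, ENNReal.toReal_ofReal (by linarith [Real.pi_pos])]; ring
  have hsum : Summable fun j : ℕ =>
      ∫ x in Set.Ioc (0:ℝ) (2*π), ‖b j * Real.sin ((j:ℝ)*x) * Real.sin ((N:ℝ)*x)‖ := by
    apply Summable.of_nonneg_of_le (fun j => integral_nonneg fun x => norm_nonneg _)
      (fun j => ?_) (hb.abs.mul_right (2*π))
    calc ∫ x in Set.Ioc (0:ℝ) (2*π), ‖b j * Real.sin ((j:ℝ)*x) * Real.sin ((N:ℝ)*x)‖
        ≤ ∫ _x in Set.Ioc (0:ℝ) (2*π), |b j| := by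
          apply integral_mono (hint j).norm (integrable_const _)
          intro x
          simp only [Real.norm_eq_abs, abs_mul]
          calc |b j| * |Real.sin ((j:ℝ)*x)| * |Real.sin ((N:ℝ)*x)|
              ≤ |b j| * 1 * 1 := by
                gcongr <;> [exact Real.abs_sin_le_one _; exact Real.abs_sin_le_one _]
            _ = |b j| := by ring
      _ = |b j| * (2*π) := by
          rw [setIntegral_const, smul_eq_mul, measureReal_def, hmeas]; ring
  rw [← integral_tsum_of_summable_integral_norm hint hsum]
  have hterm : ∀ j : ℕ, (∫ x in Set.Ioc (0:ℝ) (2*π), b j * Real.sin ((j:ℝ)*x) * Real.sin ((N:ℝ)*x))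
      = b j * if j = N then π else 0 := by
    intro j
    simp_rw [mul_assoc]
    rw [MeasureTheory.integral_const_mul, ← intervalIntegral.integral_of_le h2π, sin_orth j N hN]
  simp_rw [hterm]
  rw [tsum_eq_single N (fun j hj => by simp [hj])]
  simp

theorem fourier_sine_pairing_odd_dirac
    (b : ℕ → ℝ) (hb : Summable b)
    (W : ℝ → ℝ) (hW : ∀ x : ℝ, W x = ∑' j : ℕ, b j * Real.sin (j * x))
    (m : ℕ) (hm : 1 ≤ m)
    (φp φm : ℝ → ℂ)
    (hφp : ∀ x : ℝ, φp x =
      (Complex.exp (Complex.I * ((m : ℂ) - 1) * (x : ℂ))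
        + Complex.exp (-(Complex.I * (m : ℂ) * (x : ℂ)))) / (2 * (Real.sqrt π : ℂ)))
    (hφm : ∀ x : ℝ, φm x =
      (Complex.exp (Complex.I * ((m : ℂ) - 1) * (x : ℂ))
        - Complex.exp (-(Complex.I * (m : ℂ) * (x : ℂ))))
        / (2 * Complex.I * (Real.sqrt π : ℂ))) :
    (∫ x in (0:ℝ)..(2 * π), (W x : ℂ) * φp x * starRingEnd ℂ (φm x))
      = (b (2 * m - 1) / 2 : ℝ) := by
  have hpt : ∀ x : ℝ, (W x : ℂ) * φp x * starRingEnd ℂ (φm x)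
      = ((W x * (Real.sin (((2*m-1 : ℕ) : ℝ) * x) / (2 * π)) : ℝ) : ℂ) := by
    intro x
    rw [mul_assoc, hφp x, hφm x, pointwise_id m hm x, Complex.ofReal_mul, Complex.ofReal_div]
  simp_rw [hpt]
  rw [intervalIntegral.integral_ofReal]
  norm_cast
  have hN : 1 ≤ 2*m-1 := by omega
  have : ∫ x in (0:ℝ)..(2*π), W x * (Real.sin (((2*m-1:ℕ):ℝ)*x) / (2*π))
      = (∫ x in (0:ℝ)..(2*π), W x * Real.sin (((2*m-1:ℕ):ℝ)*x)) * (2*π)⁻¹ := by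
    rw [← intervalIntegral.integral_mul_const]
    congr 1; ext x; ring
  rw [this, real_side b hb W hW _ hN]
  field_simp
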